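/- If x is Cauchy with location 0 and scale d > 0, then E((x² − d²)/(x² + d²)²) = −1/(4d²). -/

import Mathlib

open Real MeasureTheory Filter Topology

/-- For a Cauchy(0, d) random variable, `E((x²−d²)/(x²+d²)²) = −1/(4d²)`. -/
theorem cauchy_expectation_identity (d : ℝ) (hd : 0 < d) :
    ∫ x : ℝ, (d / (π * (x ^ 2 + d ^ 2))) * ((x ^ 2 - d ^ 2) / (x ^ 2 + d ^ 2) ^ 2)
      = -(1 / (4 * d ^ 2)) := by
  have hd2 : ∀ x : ℝ, 0 < x ^ 2 + d ^ 2 := fun x => by positivity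
  set g : ℝ → ℝ := fun x => (d / (π * (x ^ 2 + d ^ 2))) * ((x ^ 2 - d ^ 2) / (x ^ 2 + d ^ 2) ^ 2) with hg
  set F : ℝ → ℝ := fun x => (d / π) * (-x / (2 * (x ^ 2 + d ^ 2) ^ 2)
      - x / (4 * d ^ 2 * (x ^ 2 + d ^ 2)) - arctan (x / d) / (4 * d ^ 3)) with hF
  have hderiv : ∀ x : ℝ, HasDerivAt F (g x) x := by
    intro x
    have hx := hd2 x
    have h1 : HasDerivAt (fun x : ℝ => -x / (2 * (x ^ 2 + d ^ 2) ^ 2))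
        ((-1 * (2 * (x ^ 2 + d ^ 2) ^ 2) - (-x) * (2 * (2 * (x^2+d^2) * (2*x)))) / (2 * (x ^ 2 + d ^ 2) ^ 2) ^ 2) x := by
      have hu : HasDerivAt (fun x : ℝ => -x) (-1) x := (hasDerivAt_id x).neg
      have hv : HasDerivAt (fun x : ℝ => 2 * (x ^ 2 + d ^ 2) ^ 2)
          (2 * (2 * (x^2+d^2) * (2*x))) x := by
        have : HasDerivAt (fun x : ℝ => x ^ 2 + d ^ 2) (2 * x) x := by
          simpa using ((hasDerivAt_pow 2 x).add_const (d ^ 2))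
        simpa [mul_comm] using ((this.pow 2).const_mul 2)
      exact hu.div hv (by positivity)
    have h2 : HasDerivAt (fun x : ℝ => x / (4 * d ^ 2 * (x ^ 2 + d ^ 2)))
        ((1 * (4 * d ^ 2 * (x ^ 2 + d ^ 2)) - x * (4 * d ^ 2 * (2 * x))) / (4 * d ^ 2 * (x ^ 2 + d ^ 2)) ^ 2) x := by
      have hv : HasDerivAt (fun x : ℝ => 4 * d ^ 2 * (x ^ 2 + d ^ 2)) (4 * d ^ 2 * (2 * x)) x := by
        have : HasDerivAt (fun x : ℝ => x ^ 2 + d ^ 2) (2 * x) x := by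
          simpa using ((hasDerivAt_pow 2 x).add_const (d ^ 2))
        exact this.const_mul _
      exact (hasDerivAt_id x).div hv (by positivity)
    have h3 : HasDerivAt (fun x : ℝ => arctan (x / d) / (4 * d ^ 3))
        ((1 / (1 + (x / d) ^ 2) * (1 / d)) / (4 * d ^ 3)) x := by
      have hxd : HasDerivAt (fun x : ℝ => x / d) (1 / d) x := by
        simpa using (hasDerivAt_id x).div_const d
      exact ((Real.hasDerivAt_arctan (x / d)).comp x hxd).div_const _
    have := (((h1.sub h2).sub h3).const_mul (d / π))
    refine this.congr_deriv ?_
    have hpi : (π : ℝ) ≠ 0 := Real.pi_ne_zero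
    have h1d : (1 : ℝ) + (x / d) ^ 2 = (x ^ 2 + d ^ 2) / d ^ 2 := by field_simp; ring
    rw [hg]
    field_simp [h1d]
    ring
  have hbound : ∀ x : ℝ, ‖g x‖ ≤ (d / π) / min (d ^ 2) 1 ^ 2 * (1 + x ^ 2)⁻¹ := by
    intro x
    have hx := hd2 x
    have hm : 0 < min (d ^ 2) 1 := lt_min (by positivity) one_pos
    have key : min (d ^ 2) 1 * (1 + x ^ 2) ≤ x ^ 2 + d ^ 2 := by
      rcases le_total (d ^ 2) 1 with h | h
      · rw [min_eq_left h]; nlinarith [sq_nonneg x]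
      · rw [min_eq_right h]; nlinarith [sq_nonneg x]
    have habs : |x ^ 2 - d ^ 2| ≤ x ^ 2 + d ^ 2 := by
      rw [abs_le]; constructor <;> nlinarith [sq_nonneg x, sq_nonneg d]
    have h1x : (0:ℝ) < 1 + x ^ 2 := by positivity
    rw [hg]
    rw [Real.norm_eq_abs, abs_mul, abs_div, abs_div]
    rw [abs_of_pos (by positivity : (0:ℝ) < π * (x ^ 2 + d ^ 2)),
      abs_of_pos hd, abs_of_pos (by positivity : (0:ℝ) < (x ^ 2 + d ^ 2) ^ 2)]
    have step1 : d / (π * (x ^ 2 + d ^ 2)) * (|x ^ 2 - d ^ 2| / (x ^ 2 + d ^ 2) ^ 2)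
        ≤ d / (π * (x ^ 2 + d ^ 2)) * ((x ^ 2 + d ^ 2) / (x ^ 2 + d ^ 2) ^ 2) := by
      apply mul_le_mul_of_nonneg_left _ (by positivity)
      exact div_le_div_of_nonneg_right habs (by positivity) |>.trans_eq rfl
    refine step1.trans ?_
    have : d / (π * (x ^ 2 + d ^ 2)) * ((x ^ 2 + d ^ 2) / (x ^ 2 + d ^ 2) ^ 2)
        = (d / π) / (x ^ 2 + d ^ 2) ^ 2 := by field_simp
    rw [this]
    have hsq : min (d ^ 2) 1 ^ 2 * (1 + x ^ 2) ≤ (x ^ 2 + d ^ 2) ^ 2 := by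
      have h1 : min (d ^ 2) 1 ^ 2 * (1 + x ^ 2) ≤ (min (d ^ 2) 1 * (1 + x ^ 2)) ^ 2 := by
        nlinarith [sq_nonneg x, hm.le, sq_nonneg (min (d ^ 2) 1)]
      have h2 : (min (d ^ 2) 1 * (1 + x ^ 2)) ^ 2 ≤ (x ^ 2 + d ^ 2) ^ 2 :=
        pow_le_pow_left₀ (by positivity) key 2
      linarith
    have := div_le_div_of_nonneg_left (by positivity : (0:ℝ) ≤ d / π)
      (by positivity : (0:ℝ) < min (d ^ 2) 1 ^ 2 * (1 + x ^ 2)) hsq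
    refine this.trans_eq ?_
    rw [div_mul_eq_div_div, div_eq_mul_inv]
  have hcont : Continuous g := by
    rw [hg]
    have hpoly : Continuous fun x : ℝ => x ^ 2 + d ^ 2 := (continuous_pow 2).add continuous_const
    exact (continuous_const.div (continuous_const.mul hpoly) fun x => mul_ne_zero Real.pi_ne_zero (hd2 x).ne').mul
      (Continuous.div ((continuous_pow 2).sub continuous_const) (hpoly.pow 2)
        fun x => pow_ne_zero 2 (hd2 x).ne')
  have hint : Integrable g := by
    refine Integrable.mono (integrable_inv_one_add_sq.const_mul (d / π / min (d ^ 2) 1 ^ 2))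
      hcont.aestronglyMeasurable (Filter.Eventually.of_forall fun x => ?_)
    refine (hbound x).trans (le_of_eq ?_)
    rw [Real.norm_eq_abs, abs_of_nonneg (by positivity)]
  have t1 : Filter.Tendsto (fun x : ℝ => x / (2 * (x ^ 2 + d ^ 2) ^ 2)) Filter.atTop (nhds 0) := by
    apply squeeze_zero' (g := fun x : ℝ => x⁻¹)
    · filter_upwards [Filter.eventually_ge_atTop (0:ℝ)] with x hx
      positivity
    · filter_upwards [Filter.eventually_ge_atTop (1:ℝ)] with x hx
      have hx0 : (0:ℝ) < x := by linarith
      rw [div_le_iff₀ (by positivity), inv_mul_eq_div, le_div_iff₀ hx0]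
      nlinarith [sq_nonneg d, sq_nonneg (x - 1), sq_nonneg (x ^ 2 - 1)]
    · exact tendsto_inv_atTop_zero
  have t2 : Filter.Tendsto (fun x : ℝ => x / (4 * d ^ 2 * (x ^ 2 + d ^ 2))) Filter.atTop (nhds 0) := by
    apply squeeze_zero' (g := fun x : ℝ => (4 * d ^ 2)⁻¹ * x⁻¹)
    · filter_upwards [Filter.eventually_ge_atTop (0:ℝ)] with x hx
      positivity
    · filter_upwards [Filter.eventually_ge_atTop (1:ℝ)] with x hx
      have hx0 : (0:ℝ) < x := by linarith
      rw [div_le_iff₀ (by positivity)]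
      have : (4 * d ^ 2)⁻¹ * x⁻¹ * (4 * d ^ 2 * (x ^ 2 + d ^ 2)) = (x ^ 2 + d ^ 2) / x := by
        field_simp
      rw [this, le_div_iff₀ hx0]
      nlinarith [sq_nonneg d, hd.le]
    · have h0 := tendsto_inv_atTop_zero.const_mul ((4 * d ^ 2)⁻¹)
      rwa [mul_zero] at h0
  have t3 : Filter.Tendsto (fun x : ℝ => arctan (x / d)) Filter.atTop (nhds (π / 2)) := by
    refine (tendsto_nhds_of_tendsto_nhdsWithin Real.tendsto_arctan_atTop).comp ?_
    exact Filter.tendsto_id.atTop_div_const hd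
  have hneg : Filter.Tendsto (fun x : ℝ => -x) Filter.atBot Filter.atTop := tendsto_neg_atBot_atTop
  have b1 : Filter.Tendsto (fun x : ℝ => x / (2 * (x ^ 2 + d ^ 2) ^ 2)) Filter.atBot (nhds 0) := by
    have := (t1.comp hneg).neg
    simp only [Function.comp, neg_div, neg_neg, neg_zero] at this
    simpa [neg_pow] using this
  have b2 : Filter.Tendsto (fun x : ℝ => x / (4 * d ^ 2 * (x ^ 2 + d ^ 2))) Filter.atBot (nhds 0) := by
    have := (t2.comp hneg).neg
    simp only [Function.comp, neg_div, neg_neg, neg_zero] at this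
    simpa [neg_pow] using this
  have b3 : Filter.Tendsto (fun x : ℝ => arctan (x / d)) Filter.atBot (nhds (-(π / 2))) := by
    refine (tendsto_nhds_of_tendsto_nhdsWithin Real.tendsto_arctan_atBot).comp ?_
    exact Filter.tendsto_id.atBot_div_const hd
  have htop : Filter.Tendsto F Filter.atTop (nhds (-(1 / (8 * d ^ 2)))) := by
    have h : Filter.Tendsto F Filter.atTop (nhds ((d / π) * (-0 - 0 - (π / 2) / (4 * d ^ 3)))) := by
      refine Filter.Tendsto.const_mul _ (Filter.Tendsto.sub (Filter.Tendsto.sub ?_ t2) (t3.div_const _))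
      simpa [neg_div] using t1.neg
    convert h using 2
    have hpi : (π : ℝ) ≠ 0 := Real.pi_ne_zero
    field_simp
    ring
  have hbot : Filter.Tendsto F Filter.atBot (nhds (1 / (8 * d ^ 2))) := by
    have h : Filter.Tendsto F Filter.atBot (nhds ((d / π) * (-0 - 0 - (-(π / 2)) / (4 * d ^ 3)))) := by
      refine Filter.Tendsto.const_mul _ (Filter.Tendsto.sub (Filter.Tendsto.sub ?_ b2) (b3.div_const _))
      simpa [neg_div] using b1.neg
    convert h using 2
    have hpi : (π : ℝ) ≠ 0 := Real.pi_ne_zero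
    field_simp
    ring
  have hkey := MeasureTheory.integral_of_hasDerivAt_of_tendsto hderiv hint hbot htop
  rw [show (∫ x : ℝ, (d / (π * (x ^ 2 + d ^ 2))) * ((x ^ 2 - d ^ 2) / (x ^ 2 + d ^ 2) ^ 2)) = ∫ x : ℝ, g x from rfl, hkey]
  ring
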